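/- Let n ≥ 1 be an integer, α ∈ (0,1), η > 0, and T ≥ 1. Let p⁰ ∈ A_α, let û⁰,…,û^{T−1} ∈ ℝ^n satisfy û^t_i ≤ 0 for all t and i, and for t = 0,…,T−1 let p^{t+1} be a minimizer of q ↦ −η·⟨q, û^t⟩ + D(q‖p^t) over A_α. Then for every p ∈ A_α, Σ_{t=0}^{T−1} ⟨p − p^t, û^t⟩ ≤ log(n/α)/η + (η/2)·Σ_{t=0}^{T−1} Σ_{i=1}^n p^t_i·(û^t_i)². -/

import Mathlib

open Finset

/-- Unnormalized negative-entropy Bregman divergence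
`D(x‖y) = ∑ i, (x i * log (x i / y i) - x i + y i)` (with `0·log 0 = 0`,
which holds automatically since `Real.log 0 = 0`). -/
noncomputable def breg {n : ℕ} (x y : Fin n → ℝ) : ℝ :=
  ∑ i, (x i * Real.log (x i / y i) - x i + y i)

/-- The clipped simplex `A_α = {x : ∑ i, x i = 1 ∧ ∀ i, x i ≥ α / n}`. -/
def clippedSimplex (n : ℕ) (α : ℝ) : Set (Fin n → ℝ) :=
  {x | (∑ i, x i) = 1 ∧ ∀ i, α / n ≤ x i}

open Real Filter Topology

lemma exp_quad {x : ℝ} (hx : x ≤ 0) : Real.exp x ≤ 1 + x + x^2/2 := by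
  have h : ∀ t : ℝ, HasDerivAt (fun t => 1 + t + t^2/2 - Real.exp t) (1 + t - Real.exp t) t := by
    intro t
    have h1 := ((hasDerivAt_id t).const_add 1).add ((hasDerivAt_pow 2 t).div_const 2)
    have h2 := h1.sub (Real.hasDerivAt_exp t)
    refine h2.congr_deriv ?_
    norm_num
  have hanti : Antitone (fun t : ℝ => 1 + t + t^2/2 - Real.exp t) := by
    apply antitone_of_deriv_nonpos
    · exact fun t => (h t).differentiableAt
    · intro t; rw [(h t).deriv]
      have := Real.add_one_le_exp t; linarith
  have h0 := hanti hx
  simp only [Real.exp_zero] at h0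
  norm_num at h0
  linarith

lemma breg_term_nonneg {x y : ℝ} (hx : 0 ≤ x) (hy : 0 < y) :
    0 ≤ x * Real.log (x/y) - x + y := by
  rcases eq_or_lt_of_le hx with h | h
  · simp [← h]; linarith
  · have h1 : Real.log (y/x) ≤ y/x - 1 := Real.log_le_sub_one_of_pos (by positivity)
    have h2 : Real.log (y/x) = - Real.log (x/y) := by
      rw [← Real.log_inv]; congr 1; field_simp
    rw [h2] at h1
    have h3 : x * (-Real.log (x/y)) ≤ x * (y/x - 1) :=
      mul_le_mul_of_nonneg_left h1 hx
    have h4 : x * (y/x - 1) = y - x := by field_simp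
    nlinarith

lemma first_order {n : ℕ} {α : ℝ} (hαn : 0 < α / n)
    (c pp w : Fin n → ℝ) (hc : c ∈ clippedSimplex n α) (hpp : pp ∈ clippedSimplex n α)
    (hw : ∀ i, 0 < w i)
    (hmin : ∀ q ∈ clippedSimplex n α, breg c w ≤ breg q w) :
    0 ≤ ∑ i, (pp i - c i) * Real.log (c i / w i) := by
  set d : Fin n → ℝ := fun i => pp i - c i with hd
  set φ : ℝ → ℝ := fun l => breg (fun i => c i + l * d i) w with hφ
  have hcpos : ∀ i, 0 < c i := fun i => lt_of_lt_of_le hαn (hc.2 i)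
  -- membership of segment
  have hseg : ∀ l : ℝ, 0 ≤ l → l ≤ 1 → (fun i => c i + l * d i) ∈ clippedSimplex n α := by
    intro l hl0 hl1
    constructor
    · have : ∑ i, (c i + l * d i) = ∑ i, c i + l * (∑ i, pp i - ∑ i, c i) := by
        rw [Finset.sum_add_distrib, ← Finset.mul_sum, hd]
        simp [Finset.sum_sub_distrib]
      rw [this, hc.1, hpp.1]; ring
    · intro i
      show α / n ≤ c i + l * d i
      have heq : c i + l * d i = (1 - l) * c i + l * pp i := by rw [hd]; ring
      rw [heq]
      have h1 := hc.2 i; have h2 := hpp.2 i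
      nlinarith
  -- derivative of φ at 0
  have hderiv : HasDerivAt φ (∑ i, d i * Real.log (c i / w i)) 0 := by
    rw [hφ]
    unfold breg
    apply HasDerivAt.fun_sum
    intro i _
    have hf : HasDerivAt (fun l : ℝ => c i + l * d i) (d i) 0 :=
      (hasDerivAt_mul_const (d i)).const_add (c i)
    have hne : c i + 0 * d i ≠ 0 := by simpa using (hcpos i).ne'
    have hdivne : (c i + 0 * d i) / w i ≠ 0 := by
      simpa using div_ne_zero (by simpa using (hcpos i).ne') (hw i).ne'
    have hlog : HasDerivAt (fun l : ℝ => Real.log ((c i + l * d i) / w i))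
        ((d i / w i) / ((c i + 0 * d i) / w i)) 0 := (hf.div_const (w i)).log hdivne
    have hmul := hf.mul hlog
    have := (hmul.sub hf).add_const (w i)
    refine this.congr_deriv ?_
    have hwne := (hw i).ne'
    have hcne := (hcpos i).ne'
    simp only [zero_mul, add_zero]
    field_simp
    ring
  -- φ 0 ≤ φ l for l in [0,1]
  have hmin' : ∀ l : ℝ, 0 ≤ l → l ≤ 1 → φ 0 ≤ φ l := by
    intro l hl0 hl1
    have h0 : φ 0 = breg c w := by simp [hφ]
    rw [h0]
    exact hmin _ (hseg l hl0 hl1)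
  -- conclude derivative ≥ 0
  have hslope : Tendsto (slope φ 0) (𝓝[>] (0:ℝ)) (𝓝 (∑ i, d i * Real.log (c i / w i))) := by
    have h := (hderiv.hasDerivWithinAt (s := Set.Ioi (0:ℝ)))
    rw [hasDerivWithinAt_iff_tendsto_slope] at h
    have : Set.Ioi (0:ℝ) \ {0} = Set.Ioi 0 := by
      apply Set.diff_singleton_eq_self; simp
    rwa [this] at h
  have hge : 0 ≤ ∑ i, d i * Real.log (c i / w i) := by
    refine ge_of_tendsto hslope ?_
    filter_upwards [Ioc_mem_nhdsGT_of_mem (Set.left_mem_Ico.2 one_pos)] with l hl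
    have h1 := hmin' l hl.1.le hl.2
    rw [slope_def_field]
    simp only [sub_zero]
    exact div_nonneg (by linarith) hl.1.le
  exact hge

lemma step_bound {n : ℕ} {α η : ℝ} (hαn : 0 < α / n) (hη : 0 < η)
    (pt c pp : Fin n → ℝ) (hpt : pt ∈ clippedSimplex n α) (hc : c ∈ clippedSimplex n α)
    (hpp : pp ∈ clippedSimplex n α)
    (u : Fin n → ℝ) (hu : ∀ i, u i ≤ 0)
    (hmin : ∀ q ∈ clippedSimplex n α,
      -η * (∑ i, c i * u i) + breg c pt ≤ -η * (∑ i, q i * u i) + breg q pt) :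
    η * ∑ i, (pp i - pt i) * u i ≤
      breg pp pt - breg pp c + η^2/2 * ∑ i, pt i * u i ^ 2 := by
  set w : Fin n → ℝ := fun i => pt i * Real.exp (η * u i) with hw
  have hptpos : ∀ i, 0 < pt i := fun i => lt_of_lt_of_le hαn (hpt.2 i)
  have hcpos : ∀ i, 0 < c i := fun i => lt_of_lt_of_le hαn (hc.2 i)
  have hpppos : ∀ i, 0 < pp i := fun i => lt_of_lt_of_le hαn (hpp.2 i)
  have hwpos : ∀ i, 0 < w i := fun i => mul_pos (hptpos i) (Real.exp_pos _)
  have hlogw : ∀ i, Real.log (w i) = Real.log (pt i) + η * u i := by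
    intro i
    rw [hw]
    simp only
    rw [Real.log_mul (hptpos i).ne' (Real.exp_ne_zero _), Real.log_exp]
  -- key identity
  have key : ∀ q : Fin n → ℝ, (∀ i, 0 < q i) →
      breg q w = breg q pt - η * (∑ i, q i * u i) + ∑ i, (w i - pt i) := by
    intro q hq
    have h0 : breg q w - breg q pt + η * (∑ i, q i * u i) - (∑ i, (w i - pt i)) = 0 := by
      unfold breg
      rw [Finset.mul_sum, ← Finset.sum_sub_distrib, ← Finset.sum_add_distrib,
        ← Finset.sum_sub_distrib]
      apply Finset.sum_eq_zero
      intro i _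
      rw [Real.log_div (hq i).ne' (hwpos i).ne', Real.log_div (hq i).ne' (hptpos i).ne',
        hlogw i]
      ring
    linarith
  have hmin2 : ∀ q ∈ clippedSimplex n α, breg c w ≤ breg q w := by
    intro q hq
    have hqpos : ∀ i, 0 < q i := fun i => lt_of_lt_of_le hαn (hq.2 i)
    have h1 := hmin q hq
    rw [key c hcpos, key q hqpos]
    linarith
  have hfo := first_order hαn c pp w hc hpp hwpos hmin2
  -- three point identity
  have h3pt : breg pp w - breg pp c - breg c w
      = ∑ i, (pp i - c i) * Real.log (c i / w i) := by
    unfold breg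
    rw [← Finset.sum_sub_distrib, ← Finset.sum_sub_distrib]
    apply Finset.sum_congr rfl
    intro i _
    rw [Real.log_div (hpppos i).ne' (hwpos i).ne', Real.log_div (hpppos i).ne' (hcpos i).ne',
      Real.log_div (hcpos i).ne' (hwpos i).ne']
    ring
  have hcw : 0 ≤ breg c w := by
    unfold breg
    apply Finset.sum_nonneg
    intro i _
    exact breg_term_nonneg (hcpos i).le (hwpos i)
  have hproj : breg pp c ≤ breg pp w := by linarith
  -- bound on ∑ (w - pt)
  have hwsum : ∑ i, (w i - pt i) ≤
      η * (∑ i, pt i * u i) + η^2/2 * ∑ i, pt i * u i ^ 2 := by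
    have hstep : ∀ i : Fin n, w i - pt i ≤ η * (pt i * u i) + η^2/2 * (pt i * u i ^ 2) := by
      intro i
      have hx : η * u i ≤ 0 := mul_nonpos_of_nonneg_of_nonpos hη.le (hu i)
      have he := exp_quad hx
      have h2 : pt i * Real.exp (η * u i) ≤ pt i * (1 + η * u i + (η * u i)^2/2) :=
        mul_le_mul_of_nonneg_left he (hptpos i).le
      rw [hw]
      simp only
      nlinarith [hptpos i]
    calc ∑ i, (w i - pt i) ≤ ∑ i, (η * (pt i * u i) + η^2/2 * (pt i * u i ^ 2)) :=
          Finset.sum_le_sum (fun i _ => hstep i)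
      _ = η * (∑ i, pt i * u i) + η^2/2 * ∑ i, pt i * u i ^ 2 := by
          rw [Finset.sum_add_distrib, ← Finset.mul_sum, ← Finset.mul_sum]
  have hkeypp := key pp hpppos
  have hsplit : ∑ i, (pp i - pt i) * u i = (∑ i, pp i * u i) - ∑ i, pt i * u i := by
    rw [← Finset.sum_sub_distrib]
    apply Finset.sum_congr rfl
    intro i _
    ring
  rw [hsplit]
  nlinarith

lemma breg_le_log {n : ℕ} (hn : 1 ≤ n) {α : ℝ} (hα0 : 0 < α)
    (pp q : Fin n → ℝ) (hpp : pp ∈ clippedSimplex n α) (hq : q ∈ clippedSimplex n α) :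
    breg pp q ≤ Real.log (↑n / α) := by
  have hnpos : (0:ℝ) < n := by exact_mod_cast hn
  have hαn : 0 < α / n := div_pos hα0 hnpos
  have hpppos : ∀ i, 0 < pp i := fun i => lt_of_lt_of_le hαn (hpp.2 i)
  have hqpos : ∀ i, 0 < q i := fun i => lt_of_lt_of_le hαn (hq.2 i)
  have hexp : breg pp q = ((∑ i, pp i * Real.log (pp i)) - ∑ i, pp i * Real.log (q i))
      + ((∑ i, q i) - ∑ i, pp i) := by
    rw [← Finset.sum_sub_distrib, ← Finset.sum_sub_distrib, ← Finset.sum_add_distrib]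
    unfold breg
    apply Finset.sum_congr rfl
    intro i _
    rw [Real.log_div (hpppos i).ne' (hqpos i).ne']
    ring
  have h1 : (∑ i, pp i * Real.log (pp i)) ≤ 0 := by
    apply Finset.sum_nonpos
    intro i _
    have hle1 : pp i ≤ 1 := by
      have := Finset.single_le_sum (f := pp) (fun j _ => (hpppos j).le) (Finset.mem_univ i)
      rwa [hpp.1] at this
    exact mul_nonpos_of_nonneg_of_nonpos (hpppos i).le
      (Real.log_nonpos (hpppos i).le hle1)
  have h2 : Real.log (α / n) ≤ ∑ i, pp i * Real.log (q i) := by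
    calc Real.log (α / n) = ∑ i, pp i * Real.log (α / n) := by
          rw [← Finset.sum_mul, hpp.1, one_mul]
      _ ≤ ∑ i, pp i * Real.log (q i) := by
          apply Finset.sum_le_sum
          intro i _
          exact mul_le_mul_of_nonneg_left (Real.log_le_log hαn (hq.2 i)) (hpppos i).le
  have h3 : Real.log (α / n) = - Real.log (↑n / α) := by
    rw [Real.log_div hα0.ne' hnpos.ne', Real.log_div hnpos.ne' hα0.ne']
    ring
  rw [hexp, hpp.1, hq.1]
  linarith


theorem stmt_11 (n : ℕ) (hn : 1 ≤ n) (α η : ℝ) (hα : 0 < α ∧ α < 1) (hη : 0 < η)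
    (T : ℕ) (hT : 1 ≤ T)
    (p : ℕ → Fin n → ℝ) (hp0 : p 0 ∈ clippedSimplex n α)
    (u : ℕ → Fin n → ℝ) (hu : ∀ t i, u t i ≤ 0)
    (hmin : ∀ t < T, p (t + 1) ∈ clippedSimplex n α ∧
      ∀ q ∈ clippedSimplex n α,
        -η * (∑ i, p (t + 1) i * u t i) + breg (p (t + 1)) (p t) ≤
          -η * (∑ i, q i * u t i) + breg q (p t)) :
    ∀ pp ∈ clippedSimplex n α,
      ∑ t ∈ Finset.range T, ∑ i, (pp i - p t i) * u t i ≤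
        Real.log (n / α) / η + η / 2 * ∑ t ∈ Finset.range T, ∑ i, p t i * u t i ^ 2 := by
  intro pp hpp
  have hnpos : (0:ℝ) < n := by exact_mod_cast hn
  have hαn : 0 < α / n := div_pos hα.1 hnpos
  have hmem : ∀ t, t ≤ T → p t ∈ clippedSimplex n α := by
    intro t
    induction t with
    | zero => intro _; exact hp0
    | succ k _ => intro hk; exact (hmin k (by omega)).1
  have hstep : ∀ t < T, η * ∑ i, (pp i - p t i) * u t i ≤
      breg pp (p t) - breg pp (p (t+1)) + η^2/2 * ∑ i, p t i * u t i ^ 2 := by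
    intro t ht
    exact step_bound hαn hη (p t) (p (t+1)) pp (hmem t ht.le) (hmem (t+1) ht) hpp
      (u t) (hu t) (hmin t ht).2
  set S := ∑ t ∈ Finset.range T, ∑ i, (pp i - p t i) * u t i with hS
  set Q := ∑ t ∈ Finset.range T, ∑ i, p t i * u t i ^ 2 with hQ
  have hsum : η * S ≤ (breg pp (p 0) - breg pp (p T)) + η^2/2 * Q := by
    rw [hS, Finset.mul_sum]
    calc ∑ t ∈ Finset.range T, η * ∑ i, (pp i - p t i) * u t i
        ≤ ∑ t ∈ Finset.range T,
            (breg pp (p t) - breg pp (p (t+1)) + η^2/2 * ∑ i, p t i * u t i ^ 2) :=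
          Finset.sum_le_sum (fun t ht => hstep t (Finset.mem_range.1 ht))
      _ = (breg pp (p 0) - breg pp (p T)) + η^2/2 * Q := by
          rw [Finset.sum_add_distrib, Finset.sum_range_sub' (fun t => breg pp (p t)) T,
            hQ, Finset.mul_sum]
  have h0 : breg pp (p 0) ≤ Real.log (↑n / α) := breg_le_log hn hα.1 pp (p 0) hpp hp0
  have hT0 : 0 ≤ breg pp (p T) := by
    have hTm := hmem T le_rfl
    have hTpos : ∀ i, 0 < p T i := fun i => lt_of_lt_of_le hαn (hTm.2 i)
    unfold breg
    apply Finset.sum_nonneg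
    intro i _
    exact breg_term_nonneg (lt_of_lt_of_le hαn (hpp.2 i)).le (hTpos i)
  have hfin : η * S ≤ Real.log (↑n / α) + η^2/2 * Q := by linarith
  have hrhs : η * (Real.log (↑n / α) / η + η / 2 * Q) = Real.log (↑n / α) + η^2/2 * Q := by
    field_simp
  rw [← mul_le_mul_iff_right₀ hη, hrhs]
  exact hfin
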